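/- arXiv:0707.2348 — 3 statements merged into one kernel-verified Lean document; each statement's English description precedes it below -/
import Mathlib

section
/- Fix d ≥ 1 and let F ∈ ℚ((q)) be a finite ℚ-linear combination of the Laurent series ((−q)^r − 2 + (−q)^{−r})^{g−1} with g ≥ 0 and 1 ≤ r ≤ d. If the coefficient of q^n in F vanishes for every integer n ≤ d, then F = 0. Equivalently, an element of V_d is uniquely determined by its coefficients of q^n for n ≤ d. -/
open HahnSeries

/-- `(−q)^r − 2 + (−q)^{−r}` as a formal Laurent series over `ℚ`. -/
noncomputable def PhiK (r : ℕ) : LaurentSeries ℚ :=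
  HahnSeries.single (r : ℤ) ((-1 : ℚ) ^ r) - 2 + HahnSeries.single (-(r : ℤ)) ((-1 : ℚ) ^ r)

namespace VdAux

noncomputable def e (n : ℤ) : ℚ := (-1 : ℚ) ^ n

lemma e_add (a b : ℤ) : e (a + b) = e a * e b := by
  unfold e; exact zpow_add₀ (by norm_num) a b

lemma e_mul_self (n : ℤ) : e n * e n = 1 := by
  rw [← e_add]
  unfold e
  rw [← two_mul, zpow_mul]
  norm_num

lemma e_sub (a b : ℤ) : e (a - b) = e a * e b := by
  have h1 : e (a - b) * e b = e a := by rw [← e_add]; ring_nf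
  calc e (a - b) = e (a - b) * (e b * e b) := by rw [e_mul_self, mul_one]
    _ = (e (a - b) * e b) * e b := by ring
    _ = e a * e b := by rw [h1]

lemma e_ne_zero (n : ℤ) : e n ≠ 0 := zpow_ne_zero n (by norm_num)

lemma e_natCast (r : ℕ) : e (r : ℤ) = (-1 : ℚ) ^ r := by
  unfold e; exact zpow_natCast _ r

noncomputable def h (r : ℕ) (n : ℤ) : ℚ :=
  if (r : ℤ) ∣ n ∧ 0 < n then ((n / (r : ℤ) : ℤ) : ℚ) * e n else 0

lemma h_nonpos (r : ℕ) {n : ℤ} (hn : n ≤ 0) : h r n = 0 := by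
  unfold h; rw [if_neg]; rintro ⟨-, h2⟩; omega

lemma h_not_dvd (r : ℕ) {n : ℤ} (hn : ¬ (r : ℤ) ∣ n) : h r n = 0 := by
  unfold h; rw [if_neg]; rintro ⟨h1, -⟩; exact hn h1

noncomputable def Hr (r : ℕ) : LaurentSeries ℚ where
  coeff := h r
  isPWO_support' := by
    refine Set.IsWF.isPWO (BddBelow.wellFoundedOn_lt ?_)
    refine BddBelow.mono ?_ (bddBelow_Ioi (a := (0 : ℤ)))
    intro n hn
    simp only [Function.mem_support] at hn
    by_contra hcon
    exact hn (h_nonpos r (by simpa using hcon))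

lemma Hr_coeff (r : ℕ) (n : ℤ) : (Hr r).coeff n = h r n := rfl

lemma single_mul_coeff' (b : ℤ) (x : ℚ) (f : LaurentSeries ℚ) (n : ℤ) :
    (HahnSeries.single b x * f).coeff n = x * f.coeff (n - b) := by
  have := HahnSeries.coeff_single_mul_add (r := x) (x := f) (a := n - b) (b := b)
  simpa using this

lemma two_eq : (2 : LaurentSeries ℚ) = HahnSeries.single (0 : ℤ) (2 : ℚ) := by
  ext m
  simp only [show (2 : LaurentSeries ℚ) = 1 + 1 from by norm_num, HahnSeries.coeff_add,
    HahnSeries.coeff_one, HahnSeries.coeff_single]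
  split_ifs <;> norm_num

lemma key (r : ℕ) (hr : 1 ≤ r) (n : ℤ) :
    (-1 : ℚ) ^ r * h r (n - r) - 2 * h r n + (-1 : ℚ) ^ r * h r (n + r)
      = if n = 0 then 1 else 0 := by
  have hrz : (r : ℤ) ≠ 0 := by exact_mod_cast Nat.one_le_iff_ne_zero.mp hr
  have hrpos : (0 : ℤ) < r := by exact_mod_cast hr
  rw [← e_natCast]
  by_cases hdvd : (r : ℤ) ∣ n
  · obtain ⟨k, rfl⟩ := hdvd
    rcases lt_trichotomy k 0 with hk | rfl | hk
    · have h1 : h r ((r : ℤ) * k - r) = 0 := h_nonpos r (by nlinarith)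
      have h2 : h r ((r : ℤ) * k) = 0 := h_nonpos r (by nlinarith)
      have h3 : h r ((r : ℤ) * k + r) = 0 := h_nonpos r (by nlinarith)
      rw [h1, h2, h3, if_neg (by have := mul_neg_of_pos_of_neg hrpos hk; omega)]
      ring
    · simp only [mul_zero]
      have h1 : h r ((0 : ℤ) - r) = 0 := h_nonpos r (by omega)
      have h2 : h r 0 = 0 := h_nonpos r le_rfl
      have h3 : h r ((0 : ℤ) + r) = e r := by
        unfold h
        rw [zero_add, if_pos ⟨dvd_refl _, hrpos⟩, Int.ediv_self hrz]
        norm_num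
      rw [h1, h2, h3, if_pos trivial]
      linear_combination e_mul_self (r : ℤ)
    · -- k ≥ 1
      have hn0 : (r : ℤ) * k ≠ 0 := by positivity
      have h2 : h r ((r : ℤ) * k) = (k : ℚ) * e ((r : ℤ) * k) := by
        unfold h
        rw [if_pos ⟨Dvd.intro k rfl, by positivity⟩, Int.mul_ediv_cancel_left _ hrz]
      have h3 : h r ((r : ℤ) * k + r) = ((k : ℚ) + 1) * (e ((r : ℤ) * k) * e r) := by
        unfold h
        have : (r : ℤ) * k + r = r * (k + 1) := by ring
        rw [this, if_pos ⟨Dvd.intro _ rfl, by nlinarith⟩, Int.mul_ediv_cancel_left _ hrz]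
        rw [show (r : ℤ) * (k + 1) = (r * k) + r by ring, e_add]
        push_cast; ring
      have h1 : h r ((r : ℤ) * k - r) = ((k : ℚ) - 1) * (e ((r : ℤ) * k) * e r) := by
        have hk1 : 1 ≤ k := hk
        rcases eq_or_lt_of_le hk1 with hke | hk2
        · rw [← hke, show (r : ℤ) * 1 - r = 0 by ring, h_nonpos r le_rfl]
          norm_num
        · unfold h
          have : (r : ℤ) * k - r = r * (k - 1) := by ring
          rw [this, if_pos ⟨Dvd.intro _ rfl, by nlinarith⟩, Int.mul_ediv_cancel_left _ hrz]
          rw [show (r : ℤ) * (k - 1) = (r * k) - r by ring, e_sub]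
          push_cast; ring
      rw [h1, h2, h3, if_neg hn0]
      linear_combination (2 * (k : ℚ) * e ((r : ℤ) * k)) * e_mul_self (r : ℤ)
  · have hn0 : n ≠ 0 := by rintro rfl; exact hdvd (dvd_zero _)
    have h1 : h r (n - r) = 0 := h_not_dvd r (by
      intro hc; exact hdvd (by simpa using dvd_add hc (dvd_refl (r : ℤ))))
    have h3 : h r (n + r) = 0 := h_not_dvd r (by
      intro hc; exact hdvd (by simpa using dvd_sub hc (dvd_refl (r : ℤ))))
    rw [h1, h_not_dvd r hdvd, h3, if_neg hn0]
    ring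

lemma phiK_mul_Hr (r : ℕ) (hr : 1 ≤ r) : PhiK r * Hr r = 1 := by
  ext n
  rw [HahnSeries.coeff_one]
  unfold PhiK
  rw [add_mul, sub_mul, two_eq]
  rw [HahnSeries.coeff_add, HahnSeries.coeff_sub, single_mul_coeff', single_mul_coeff',
    single_mul_coeff', Hr_coeff, Hr_coeff, Hr_coeff]
  rw [sub_zero, show n - -(r : ℤ) = n + r by ring]
  convert key r hr n using 2

lemma phiK_inv_coeff (r : ℕ) (hr : 1 ≤ r) (n : ℤ) : ((PhiK r)⁻¹).coeff n = h r n := by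
  rw [inv_eq_of_mul_eq_one_right (phiK_mul_Hr r hr), Hr_coeff]




def IsSymm (F : LaurentSeries ℚ) : Prop := ∀ n : ℤ, F.coeff (-n) = F.coeff n

lemma IsSymm.neg_mem_support {a : LaurentSeries ℚ} (ha : IsSymm a) {n : ℤ}
    (hn : n ∈ a.support) : -n ∈ a.support := by
  simp only [HahnSeries.mem_support] at hn ⊢
  rw [ha n]; exact hn

lemma IsSymm.mul {a b : LaurentSeries ℚ} (ha : IsSymm a) (hb : IsSymm b) : IsSymm (a * b) := by
  intro n
  rw [HahnSeries.coeff_mul, HahnSeries.coeff_mul]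
  refine Finset.sum_nbij' (fun ij => (-ij.1, -ij.2)) (fun ij => (-ij.1, -ij.2)) ?_ ?_ ?_ ?_ ?_
  · rintro ⟨i, j⟩ hij
    rw [Finset.mem_addAntidiagonal] at hij ⊢
    obtain ⟨u1, u2, u3⟩ := hij
    exact ⟨ha.neg_mem_support u1, hb.neg_mem_support u2, by show -i + -j = n; omega⟩
  · rintro ⟨i, j⟩ hij
    rw [Finset.mem_addAntidiagonal] at hij ⊢
    obtain ⟨u1, u2, u3⟩ := hij
    exact ⟨ha.neg_mem_support u1, hb.neg_mem_support u2, by show -i + -j = -n; omega⟩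
  · rintro ⟨i, j⟩ _; simp
  · rintro ⟨i, j⟩ _; simp
  · rintro ⟨i, j⟩ _
    simp only
    rw [ha i, hb j]

lemma IsSymm.one : IsSymm (1 : LaurentSeries ℚ) := by
  intro n
  simp [HahnSeries.coeff_one, neg_eq_zero]

lemma IsSymm.phiK (r : ℕ) : IsSymm (PhiK r) := by
  intro n
  unfold PhiK
  rw [two_eq]
  simp only [HahnSeries.coeff_add, HahnSeries.coeff_sub, HahnSeries.coeff_single]
  split_ifs <;> first | (exfalso; omega) | ring

lemma IsSymm.phiK_pow (r : ℕ) (m : ℕ) : IsSymm (PhiK r ^ m) := by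
  induction m with
  | zero => simpa using IsSymm.one
  | succ m ih => rw [pow_succ]; exact ih.mul (IsSymm.phiK r)

def Symm : Submodule ℚ (LaurentSeries ℚ) where
  carrier := {F | IsSymm F}
  add_mem' := by
    intro a b ha hb n
    simp only [HahnSeries.coeff_add, ha n, hb n]
  zero_mem' := by intro n; simp
  smul_mem' := by
    intro c a ha n
    simp only [HahnSeries.coeff_smul, ha n]

noncomputable def L (d : ℕ) : (ℕ → ℚ) →ₗ[ℚ] LaurentSeries ℚ where
  toFun a := ∑ r ∈ Finset.Icc 1 d, a r • (PhiK r)⁻¹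
  map_add' a b := by
    simp only [Pi.add_apply, add_smul, Finset.sum_add_distrib]
  map_smul' c a := by
    simp only [Pi.smul_apply, smul_eq_mul, RingHom.id_apply, Finset.smul_sum, smul_smul]

lemma L_coeff (d : ℕ) (a : ℕ → ℚ) (n : ℤ) :
    (L d a).coeff n = ∑ r ∈ Finset.Icc 1 d, a r * h r n := by
  have : (L d a).coeff n = ∑ r ∈ Finset.Icc 1 d, (a r • (PhiK r)⁻¹).coeff n := by
    unfold L
    simp only [LinearMap.coe_mk, AddHom.coe_mk]
    induction (Finset.Icc 1 d) using Finset.induction_on with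
    | empty => simp
    | insert _ _ hx ih => simp_all [Finset.sum_insert hx, HahnSeries.coeff_add]
  rw [this]
  refine Finset.sum_congr rfl ?_
  intro r hr
  rw [HahnSeries.coeff_smul, phiK_inv_coeff r (Finset.mem_Icc.mp hr).1 n, smul_eq_mul]

end VdAux



open VdAux

/-- **Lemma* 3.6** of Pandharipande–Thomas, "Curve counting via stable pairs in the derived
category".  Fix `d ≥ 1` and let `F ∈ ℚ((q))` be a finite `ℚ`-linear combination of the Laurent
series `((−q)^r − 2 + (−q)^{−r})^{g−1}` with `g ≥ 0` and `1 ≤ r ≤ d` (i.e. `F ∈ V_d`).  If the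
coefficient of `q^n` in `F` vanishes for every integer `n ≤ d`, then `F = 0`: an element of `V_d`
is uniquely determined by its coefficients of `q^n` for `n ≤ d`. -/
theorem Vd_determined_by_low_coefficients (d : ℕ) (hd : 1 ≤ d) (F : LaurentSeries ℚ)
    (hF : F ∈ Submodule.span ℚ
      {x : LaurentSeries ℚ | ∃ (g : ℕ) (r : ℕ), 1 ≤ r ∧ r ≤ d ∧ x = (PhiK r) ^ ((g : ℤ) - 1)})
    (hvan : ∀ n : ℤ, n ≤ (d : ℤ) → F.coeff n = 0) :
    F = 0 := by
  have hsub : Submodule.span ℚ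
      {x : LaurentSeries ℚ | ∃ (g : ℕ) (r : ℕ), 1 ≤ r ∧ r ≤ d ∧ x = (PhiK r) ^ ((g : ℤ) - 1)}
      ≤ Symm ⊔ LinearMap.range (L d) := by
    rw [Submodule.span_le]
    rintro x ⟨g, r, hr1, hrd, rfl⟩
    match g with
    | 0 =>
      refine Submodule.mem_sup_right ⟨Pi.single r (1 : ℚ), ?_⟩
      have hL : (L d) (Pi.single r (1 : ℚ)) = (PhiK r)⁻¹ := by
        unfold L
        simp only [LinearMap.coe_mk, AddHom.coe_mk]
        rw [Finset.sum_eq_single r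
          (fun s _ hs => by rw [Pi.single_eq_of_ne hs, zero_smul])
          (fun hmem => absurd (Finset.mem_Icc.mpr ⟨hr1, hrd⟩) hmem)]
        rw [Pi.single_eq_same, one_smul]
      rw [hL, show ((0 : ℕ) : ℤ) - 1 = -1 by norm_num, zpow_neg_one]
    | g + 1 =>
      refine Submodule.mem_sup_left ?_
      have hcast : ((g + 1 : ℕ) : ℤ) - 1 = (g : ℤ) := by push_cast; ring
      rw [hcast, zpow_natCast]
      exact IsSymm.phiK_pow r g
  obtain ⟨P, hP, G, ⟨a, rfl⟩, hsum⟩ := Submodule.mem_sup.mp (hsub hF)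
  have hGcoeff : ∀ n : ℤ, (L d a).coeff n = ∑ r ∈ Finset.Icc 1 d, a r * h r n := L_coeff d a
  have hGneg : ∀ n : ℤ, n ≤ 0 → (L d a).coeff n = 0 := by
    intro n hn
    rw [hGcoeff n]
    exact Finset.sum_eq_zero fun r _ => by rw [h_nonpos r hn, mul_zero]
  have hPcoeff : P = 0 := by
    have hneg : ∀ n : ℤ, n ≤ 0 → P.coeff n = 0 := by
      intro n hn
      have h1 : F.coeff n = 0 := hvan n (le_trans hn (by exact_mod_cast Nat.zero_le d))
      have : F.coeff n = P.coeff n + (L d a).coeff n := by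
        rw [← hsum, HahnSeries.coeff_add]
      rw [this, hGneg n hn, add_zero] at h1
      exact h1
    ext n
    rw [HahnSeries.coeff_zero]
    rcases le_or_gt n 0 with hn | hn
    · exact hneg n hn
    · rw [← hP n]
      exact hneg (-n) (by omega)
  have hFG : F = L d a := by rw [← hsum, hPcoeff, zero_add]
  have haz : ∀ r, r ∈ Finset.Icc 1 d → a r = 0 := by
    intro r
    induction r using Nat.strong_induction_on with
    | _ r ih =>
      intro hr
      obtain ⟨hr1, hrd⟩ := Finset.mem_Icc.mp hr
      have h0 : F.coeff (r : ℤ) = 0 := hvan r (by exact_mod_cast hrd)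
      rw [hFG, hGcoeff] at h0
      have hrpos : (0 : ℤ) < (r : ℤ) := by exact_mod_cast hr1
      rw [Finset.sum_eq_single r (fun s hs hsne => ?_)
        (fun hmem => absurd hr hmem)] at h0
      · have hhr : h r (r : ℤ) = e (r : ℤ) := by
          unfold h
          rw [if_pos ⟨dvd_refl _, hrpos⟩,
            Int.ediv_self (by exact_mod_cast Nat.one_le_iff_ne_zero.mp hr1)]
          norm_num
        rw [hhr] at h0
        exact (mul_eq_zero.mp h0).resolve_right (e_ne_zero _)
      · obtain ⟨hs1, hsd⟩ := Finset.mem_Icc.mp hs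
        rcases lt_or_gt_of_ne hsne with hlt | hgt
        · rw [ih s hlt (Finset.mem_Icc.mpr ⟨hs1, hsd⟩), zero_mul]
        · rw [h_not_dvd s ?_, mul_zero]
          intro hdvd
          have := Int.le_of_dvd hrpos hdvd
          omega
  have : L d a = 0 := by
    show ∑ s ∈ Finset.Icc 1 d, a s • (PhiK s)⁻¹ = 0
    exact Finset.sum_eq_zero fun s hs => by rw [haz s hs, zero_smul]
  rw [hFG, this]
end

section
/- Fix d ≥ 1 and let c_1,…,c_d ∈ ℚ. If the Laurent series Σ_{r=1}^d c_r · ((−q)^r − 2 + (−q)^{−r})^{−1} = Σ_{r=1}^d c_r · Σ_{m≥1} m·(−q)^{rm} ∈ ℚ((q)) has only finitely many nonzero coefficients (i.e., is a Laurent polynomial), then c_1 = ⋯ = c_d = 0. In particular, the expansions of (−q)^r/(1−(−q)^r)² for 1 ≤ r ≤ d are linearly independent in V_d modulo V_0. -/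
open HahnSeries

noncomputable def FF (r : ℕ) : LaurentSeries ℚ :=
  HahnSeries.ofSuppBddBelow
    (fun n : ℤ => if 0 < n ∧ (r : ℤ) ∣ n then ((n / r : ℤ) : ℚ) * (-1 : ℚ) ^ n else 0)
    (by
      refine ⟨0, fun n hn => ?_⟩
      simp only [Function.mem_support, ne_eq, ite_eq_right_iff, not_forall] at hn
      exact le_of_lt hn.choose.1)

lemma FF_coeff (r : ℕ) (n : ℤ) :
    (FF r).coeff n = if 0 < n ∧ (r : ℤ) ∣ n then ((n / r : ℤ) : ℚ) * (-1 : ℚ) ^ n else 0 := rfl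

lemma single_mul_coeff' {e : ℚ} {x : LaurentSeries ℚ} {b n : ℤ} :
    (HahnSeries.single b e * x).coeff n = e * x.coeff (n - b) := by
  have := HahnSeries.coeff_single_mul_add (r := e) (x := x) (a := n - b) (b := b)
  rwa [sub_add_cancel] at this

lemma u_step (m : ℤ) (hm : m ≠ 0) :
    (if 0 < m - 1 then ((m - 1 : ℤ) : ℚ) else 0) + (if 0 < m + 1 then ((m + 1 : ℤ) : ℚ) else 0)
      - 2 * (if 0 < m then ((m : ℤ) : ℚ) else 0) = 0 := by
  rcases lt_trichotomy m 0 with h | h | h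
  · rw [if_neg (by omega), if_neg (by omega), if_neg (by omega)]; ring
  · exact absurd h hm
  · rcases eq_or_lt_of_le (by omega : (1:ℤ) ≤ m) with h1 | h1
    · rw [← h1]; norm_num
    · rw [if_pos (by omega), if_pos (by omega), if_pos (by omega)]
      push_cast; ring

lemma eps_sq (r : ℕ) : ((-1 : ℚ) ^ r) * ((-1 : ℚ) ^ r) = 1 := by
  rw [← _root_.pow_add, ← two_mul, pow_mul]; norm_num

lemma FF_coeff_mul (r : ℕ) (hr : 1 ≤ r) (k : ℤ) :
    (FF r).coeff ((r : ℤ) * k)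
      = (if 0 < k then ((k : ℤ) : ℚ) else 0) * ((-1 : ℚ) ^ (r : ℤ)) ^ k := by
  have hr0 : (0:ℤ) < (r:ℤ) := by exact_mod_cast hr
  rw [FF_coeff]
  have hiff : (0 < (r:ℤ) * k ∧ (r:ℤ) ∣ (r:ℤ) * k) ↔ 0 < k := by
    constructor
    · rintro ⟨h, -⟩; nlinarith
    · intro h; exact ⟨by nlinarith, dvd_mul_right _ _⟩
  rw [if_congr hiff rfl rfl, Int.mul_ediv_cancel_left _ (ne_of_gt hr0), zpow_mul]
  rcases lt_or_ge 0 k with h | h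
  · rw [if_pos h, if_pos h]
  · rw [if_neg (not_lt.mpr h), if_neg (not_lt.mpr h)]
    simp

lemma phiK_mul_FF (r : ℕ) (hr : 1 ≤ r) : PhiK r * FF r = 1 := by
  have hr0 : (0:ℤ) < (r:ℤ) := by exact_mod_cast hr
  have hne : (-1 : ℚ) ≠ 0 := by norm_num
  set E : ℚ := (-1 : ℚ) ^ (r : ℤ) with hE
  have hEne : E ≠ 0 := zpow_ne_zero _ hne
  have hEE : E * E = 1 := by rw [hE, zpow_natCast]; exact eps_sq r
  have hEnat : E = (-1 : ℚ) ^ r := by rw [hE, zpow_natCast]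
  ext n
  have hdecomp : (PhiK r * FF r).coeff n
      = E * (FF r).coeff (n - r) - ((FF r).coeff n + (FF r).coeff n)
        + E * (FF r).coeff (n + r) := by
    rw [PhiK, add_mul, sub_mul, HahnSeries.coeff_add, HahnSeries.coeff_sub,
      single_mul_coeff', single_mul_coeff', sub_neg_eq_add, hEnat]
    congr 1
    congr 1
    rw [two_mul, HahnSeries.coeff_add]
  rw [hdecomp]
  by_cases hdvd : (r : ℤ) ∣ n
  · obtain ⟨m, rfl⟩ := hdvd
    have e1 : (r:ℤ) * m - (r:ℤ) = (r:ℤ) * (m - 1) := by ring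
    have e2 : (r:ℤ) * m + (r:ℤ) = (r:ℤ) * (m + 1) := by ring
    rw [e1, e2, FF_coeff_mul r hr, FF_coeff_mul r hr, FF_coeff_mul r hr]
    have hE1 : E * E ^ (m - 1) = E ^ m := by
      rw [mul_comm, ← zpow_add_one₀ hEne, sub_add_cancel]
    have hE2 : E * E ^ (m + 1) = E ^ m := by
      rw [mul_comm, ← zpow_add_one₀ hEne, show m + 1 + 1 = m + 2 by ring, zpow_add₀ hEne,
        show (2:ℤ) = ((2:ℕ):ℤ) by norm_num, zpow_natCast, pow_two, hEE, mul_one]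
    rcases eq_or_ne m 0 with rfl | hm
    · have : (1 : LaurentSeries ℚ).coeff ((r:ℤ) * 0) = 1 := by
        rw [mul_zero, HahnSeries.coeff_one, if_pos rfl]
      rw [this, if_neg (by norm_num : ¬ (0:ℤ) < 0 - 1), if_neg (by norm_num : ¬ (0:ℤ) < 0),
        if_pos (by norm_num : (0:ℤ) < 0 + 1)]
      have h01 : E ^ ((0:ℤ) + 1) = E := by norm_num
      rw [h01]
      push_cast
      linear_combination hEE
    · have hrhs : (1 : LaurentSeries ℚ).coeff ((r:ℤ) * m) = 0 := by
        rw [HahnSeries.coeff_one, if_neg (mul_ne_zero (ne_of_gt hr0) hm)]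
      rw [hrhs,
        show E * ((if 0 < m - 1 then ((m - 1 : ℤ) : ℚ) else 0) * E ^ (m - 1))
          = (if 0 < m - 1 then ((m - 1 : ℤ) : ℚ) else 0) * (E * E ^ (m - 1)) by ring, hE1,
        show E * ((if 0 < m + 1 then ((m + 1 : ℤ) : ℚ) else 0) * E ^ (m + 1))
          = (if 0 < m + 1 then ((m + 1 : ℤ) : ℚ) else 0) * (E * E ^ (m + 1)) by ring, hE2]
      linear_combination E ^ m * u_step m hm
  · have h1 : ¬ ((r:ℤ) ∣ n - r) := fun h => hdvd (by
      have := dvd_add h (dvd_refl (r:ℤ)); rwa [sub_add_cancel] at this)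
    have h2 : ¬ ((r:ℤ) ∣ n + r) := fun h => hdvd ((dvd_add_right (dvd_refl (r:ℤ))).mp (by rwa [add_comm] at h))
    have h0 : n ≠ 0 := fun h => hdvd (h ▸ dvd_zero _)
    rw [FF_coeff, FF_coeff, FF_coeff, if_neg (by tauto), if_neg (by tauto), if_neg (by tauto),
      HahnSeries.coeff_one, if_neg h0]
    ring

lemma phiK_zpow_neg_one (r : ℕ) (hr : 1 ≤ r) : (PhiK r) ^ (-1 : ℤ) = FF r := by
  rw [zpow_neg_one]
  exact inv_eq_of_mul_eq_one_right (phiK_mul_FF r hr)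

lemma coeff_sum (s : Finset ℕ) (f : ℕ → LaurentSeries ℚ) (n : ℤ) :
    (∑ r ∈ s, f r).coeff n = ∑ r ∈ s, (f r).coeff n := by
  induction s using Finset.cons_induction with
  | empty => simp
  | cons a s ha ih => rw [Finset.sum_cons, Finset.sum_cons, HahnSeries.coeff_add, ih]

/-- **Linear independence of the `g = 0` generators of `V_d` modulo `V_0`** (Pandharipande–Thomas,
"Curve counting via stable pairs in the derived category").  Fix `d ≥ 1` and `c_1, …, c_d ∈ ℚ`.
If the Laurent series `Σ_{r=1}^d c_r · ((−q)^r − 2 + (−q)^{−r})^{−1} ∈ ℚ((q))` has only finitely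
many nonzero coefficients (i.e. is a Laurent polynomial), then `c_1 = ⋯ = c_d = 0`.  In
particular, the expansions of `(−q)^r/(1−(−q)^r)²` for `1 ≤ r ≤ d` are linearly independent in
`V_d` modulo `V_0`. -/
theorem phi_inverses_linearly_independent_mod_laurent_polynomials
    (d : ℕ) (hd : 1 ≤ d) (c : ℕ → ℚ)
    (hfin : (∑ r ∈ Finset.Icc 1 d, c r • (PhiK r) ^ (-1 : ℤ)).support.Finite) :
    ∀ r ∈ Finset.Icc 1 d, c r = 0 := by
  have hS : ∀ n : ℤ, (∑ r ∈ Finset.Icc 1 d, c r • (PhiK r) ^ (-1 : ℤ)).coeff n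
      = ∑ r ∈ Finset.Icc 1 d, c r * (FF r).coeff n := by
    intro n
    rw [coeff_sum]
    refine Finset.sum_congr rfl fun r hrm => ?_
    obtain ⟨h1, -⟩ := Finset.mem_Icc.mp hrm
    rw [phiK_zpow_neg_one r h1, HahnSeries.coeff_smul, smul_eq_mul]
  obtain ⟨N, hN⟩ : ∃ N : ℤ, ∀ n : ℤ, N < n →
      (∑ r ∈ Finset.Icc 1 d, c r • (PhiK r) ^ (-1 : ℤ)).coeff n = 0 := by
    obtain ⟨N, hN⟩ := hfin.bddAbove
    refine ⟨N, fun n hn => ?_⟩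
    by_contra h
    exact absurd (hN (HahnSeries.mem_support _ _ |>.mpr h)) (not_le.mpr hn)
  intro r
  induction r using Nat.strong_induction_on with
  | _ r ih =>
    intro hrm
    obtain ⟨hr1, hrd⟩ := Finset.mem_Icc.mp hrm
    obtain ⟨P, hPle, hPp⟩ := Nat.exists_infinite_primes (max (d + 1) (N.toNat + 1))
    have hPd : d < P := lt_of_lt_of_le (by omega) (le_trans (le_max_left _ _) hPle)
    have hPN : N < (P : ℤ) := by
      have h1 : N ≤ (N.toNat : ℤ) := Int.self_le_toNat N
      have h2 : N.toNat + 1 ≤ P := le_trans (le_max_right _ _) hPle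
      omega
    set n : ℤ := ((r * P : ℕ) : ℤ) with hn
    have hnN : N < n := by
      have h1 : P ≤ r * P := Nat.le_mul_of_pos_left P (by omega)
      have h2 : (P : ℤ) ≤ n := by rw [hn]; exact_mod_cast h1
      omega
    have h0 := hN n hnN
    rw [hS] at h0
    have heval : ∀ r' ∈ Finset.Icc 1 d,
        c r' * (FF r').coeff n = if r' = r then c r * ((P : ℚ) * (-1 : ℚ) ^ n) else 0 := by
      intro r' hrm'
      obtain ⟨h1', hd'⟩ := Finset.mem_Icc.mp hrm'
      by_cases hrr : r' = r
      · subst hrr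
        have hpos : (0 : ℤ) < n := by
          rw [hn]; exact_mod_cast Nat.mul_pos (by omega : 0 < r') hPp.pos
        rw [if_pos rfl, FF_coeff, if_pos ⟨hpos, ⟨(P : ℤ), by rw [hn]; push_cast; ring⟩⟩]
        have hdivP : n / (r' : ℤ) = (P : ℤ) := by
          rw [hn]; push_cast
          exact Int.mul_ediv_cancel_left _ (by exact_mod_cast (by omega : r' ≠ 0))
        rw [hdivP]
        push_cast
        ring
      · rw [if_neg hrr]
        by_cases hdvd : (r' : ℤ) ∣ n
        · have hdnat : r' ∣ r * P := by
            rw [hn] at hdvd; exact_mod_cast hdvd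
          have hndvd : ¬ P ∣ r' := fun h => absurd (Nat.le_of_dvd (by omega) h) (by omega)
          have hcop : Nat.Coprime r' P := ((Nat.Prime.coprime_iff_not_dvd hPp).mpr hndvd).symm
          have hdr : r' ∣ r := Nat.Coprime.dvd_of_dvd_mul_right hcop hdnat
          have hlt : r' < r :=
            (lt_or_eq_of_le (Nat.le_of_dvd (by omega) hdr)).resolve_right hrr
          rw [ih r' hlt (Finset.mem_Icc.mpr ⟨h1', hd'⟩), zero_mul]
        · rw [FF_coeff, if_neg (fun h => hdvd h.2), mul_zero]
    rw [Finset.sum_congr rfl heval, Finset.sum_ite_eq' (Finset.Icc 1 d) r, if_pos hrm] at h0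
    have hPne : (P : ℚ) ≠ 0 := Nat.cast_ne_zero.mpr hPp.pos.ne'
    have hEne : (-1 : ℚ) ^ n ≠ 0 := zpow_ne_zero _ (by norm_num)
    rcases mul_eq_zero.mp h0 with h | h
    · exact h
    · exact absurd h (mul_ne_zero hPne hEne)
end

section
/- Let Ψ ∈ ℚ((q)) be the expansion of the rational function q/(1+q+q²), i.e. Ψ = q(1−q)/(1−q³) = Σ_{m≥0} (q^{3m+1} − q^{3m+2}). Then for every d ≥ 1, Ψ does not lie in V_d; that is, Ψ is not a finite ℚ-linear combination of the Laurent series ((−q)^r − 2 + (−q)^{−r})^{g−1} with g ≥ 0 and 1 ≤ r ≤ d — even though the rational function q/(1+q+q²) is invariant under q ↔ q^{−1} and has poles only at third roots of unity. -/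
open HahnSeries

lemma isPWO_of_Ici (s : Set ℤ) (a : ℤ) (h : s ⊆ Set.Ici a) : s.IsPWO := by
  apply Set.IsWF.isPWO
  rw [Set.isWF_iff_no_descending_seq]
  intro f hf hmem
  have key : ∀ n : ℕ, f n ≤ f 0 - n := by
    intro n
    induction n with
    | zero => simp
    | succ k ih =>
      have h2 : f (k + 1) < f k := hf (Nat.lt_succ_self k)
      push_cast
      omega
  have h3 : f (f 0 - a + 1).toNat ∈ s := hmem _
  have h4 := key (f 0 - a + 1).toNat
  have h5 := h h3
  simp only [Set.mem_Ici] at h5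
  omega

/-- auxiliary: a Hahn series from a coeff function supported in `Set.Ici a`. -/
noncomputable def mkL (f : ℤ → ℚ) (a : ℤ) (h : ∀ n, f n ≠ 0 → a ≤ n) : LaurentSeries ℚ :=
  ⟨f, isPWO_of_Ici _ a (fun n hn => h n hn)⟩

@[simp] lemma mkL_coeff (f : ℤ → ℚ) (a : ℤ) (h) (n : ℤ) : (mkL f a h).coeff n = f n := rfl

noncomputable def SS : LaurentSeries ℚ :=
  mkL (fun n => if 0 ≤ n ∧ 3 ∣ n then 1 else 0) 0 (by
    intro n hn
    by_contra hc
    apply hn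
    simp only [ite_eq_right_iff]
    intro h'
    omega)

lemma SS_mul : (1 - HahnSeries.single (3 : ℤ) (1 : ℚ)) * SS = 1 := by
  ext n
  rw [sub_mul, one_mul, coeff_sub]
  have h1 : (HahnSeries.single (3 : ℤ) (1 : ℚ) * SS).coeff n = SS.coeff (n - 3) := by
    have := coeff_single_mul_add (r := (1:ℚ)) (x := SS) (a := n - 3) (b := (3:ℤ))
    rw [show n - 3 + 3 = n from by ring] at this
    rw [this, one_mul]
  rw [h1]
  simp only [SS, mkL_coeff, coeff_one]
  split_ifs <;> (try norm_num) <;> omega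

/-- `Ψ ∈ ℚ((q))`, the Laurent series expansion of the rational function
`q/(1 + q + q²) = q(1−q)/(1−q³) = Σ_{m ≥ 0} (q^{3m+1} − q^{3m+2})`, obtained by inverting
`1 − q³` in the Laurent series field. -/
noncomputable def Psi : LaurentSeries ℚ :=
  (HahnSeries.single (1 : ℤ) (1 : ℚ) - HahnSeries.single (2 : ℤ) (1 : ℚ)) *
    (1 - HahnSeries.single (3 : ℤ) (1 : ℚ))⁻¹

lemma Psi_coeff (n : ℤ) :
    Psi.coeff n = (if 0 ≤ n - 1 ∧ 3 ∣ n - 1 then (1:ℚ) else 0)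
      - (if 0 ≤ n - 2 ∧ 3 ∣ n - 2 then (1:ℚ) else 0) := by
  have hinv : (1 - HahnSeries.single (3 : ℤ) (1 : ℚ))⁻¹ = SS :=
    (eq_inv_of_mul_eq_one_right SS_mul).symm
  rw [Psi, hinv, sub_mul, coeff_sub]
  have h1 : (HahnSeries.single (1 : ℤ) (1:ℚ) * SS).coeff n = SS.coeff (n - 1) := by
    have := coeff_single_mul_add (r := (1:ℚ)) (x := SS) (a := n - 1) (b := (1:ℤ))
    rw [show n - 1 + 1 = n from by ring] at this
    rw [this, one_mul]
  have h2 : (HahnSeries.single (2 : ℤ) (1:ℚ) * SS).coeff n = SS.coeff (n - 2) := by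
    have := coeff_single_mul_add (r := (1:ℚ)) (x := SS) (a := n - 2) (b := (2:ℤ))
    rw [show n - 2 + 2 = n from by ring] at this
    rw [this, one_mul]
  rw [h1, h2]
  rfl

lemma Psi_coeff_sq (p : ℕ) (hp : p.Prime) (hp3 : 3 < p) :
    (Psi.coeff (p : ℤ)) ^ 2 = 1 := by
  have h3 : ¬ (3 : ℤ) ∣ (p : ℤ) := by
    intro h
    have h' : (3:ℕ) ∣ p := by exact_mod_cast h
    exact absurd ((Nat.prime_dvd_prime_iff_eq (by norm_num) hp).mp h') (by omega)
  rw [Psi_coeff]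
  split_ifs <;> (try norm_num) <;> omega

def sg (n : ℤ) : ℚ := if Even n then 1 else -1

lemma sg_add (a b : ℤ) : sg (a + b) = sg a * sg b := by
  by_cases ha : Even a <;> by_cases hb : Even b <;>
    simp [sg, Int.even_add, ha, hb]

lemma sg_neg (a : ℤ) : sg (-a) = sg a := by simp [sg]

lemma sg_sq (a : ℤ) : sg a * sg a = 1 := by
  by_cases ha : Even a <;> simp [sg, ha]

lemma sg_zero : sg 0 = 1 := by simp [sg]

lemma sg_natCast (r : ℕ) : sg (r : ℤ) = (-1 : ℚ) ^ r := by
  by_cases h : Even r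
  · simp [sg, h, Int.even_coe_nat, h.neg_one_pow]
  · rw [sg, if_neg (by rwa [Int.even_coe_nat]), (Nat.not_even_iff_odd.mp h).neg_one_pow]

noncomputable def T (r : ℕ) : LaurentSeries ℚ :=
  mkL (fun n => if 0 < n ∧ (r : ℤ) ∣ n then sg n * ((n / (r : ℤ) : ℤ) : ℚ) else 0) 1 (by
    intro n hn
    by_contra hc
    exact hn (if_neg (fun h => hc (by omega))))

lemma T_coeff_mul (r : ℕ) (hr : 1 ≤ r) (k : ℤ) :
    (T r).coeff ((r : ℤ) * k) = if 0 < k then sg ((r : ℤ) * k) * k else 0 := by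
  have hr0 : (0 : ℤ) < (r : ℤ) := by exact_mod_cast hr
  simp only [T, mkL_coeff]
  by_cases hk : 0 < k
  · rw [if_pos ⟨mul_pos hr0 hk, Dvd.intro k rfl⟩, if_pos hk,
      Int.mul_ediv_cancel_left _ (by omega)]
  · rw [if_neg, if_neg hk]
    rintro ⟨h1, -⟩
    nlinarith

lemma PhiK_mul_T (r : ℕ) (hr : 1 ≤ r) : PhiK r * T r = 1 := by
  have hr0 : (r : ℤ) ≠ 0 := by positivity
  ext z
  rw [PhiK, add_mul, sub_mul, coeff_add, coeff_sub]
  have hA : (single ((r : ℤ)) ((-1:ℚ)^r) * T r).coeff z = (-1:ℚ)^r * (T r).coeff (z - r) := by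
    have := coeff_single_mul_add (r := ((-1:ℚ)^r)) (x := T r) (a := z - r) (b := ((r : ℤ)))
    rw [show z - r + r = z from by ring] at this
    rw [this]
  have hC : (single (-(r : ℤ)) ((-1:ℚ)^r) * T r).coeff z = (-1:ℚ)^r * (T r).coeff (z + r) := by
    have := coeff_single_mul_add (r := ((-1:ℚ)^r)) (x := T r) (a := z + r) (b := (-(r : ℤ)))
    rw [show z + r + -r = z from by ring] at this
    rw [this]
  have hB : ((2 : LaurentSeries ℚ) * T r).coeff z = (T r).coeff z + (T r).coeff z := by
    rw [two_mul, coeff_add]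
  rw [hA, hB, hC, ← sg_natCast]
  by_cases hd : (r : ℤ) ∣ z
  · obtain ⟨k, hk⟩ := hd
    subst hk
    have e1 : (r : ℤ) * k - r = (r : ℤ) * (k - 1) := by ring
    have e2 : (r : ℤ) * k + r = (r : ℤ) * (k + 1) := by ring
    rw [e1, e2, T_coeff_mul r hr, T_coeff_mul r hr, T_coeff_mul r hr]
    have s1 : sg ((r : ℤ) * (k - 1)) = sg ((r : ℤ) * k) * sg (r : ℤ) := by
      rw [show (r : ℤ) * (k - 1) = (r : ℤ) * k + (-(r : ℤ)) from by ring, sg_add, sg_neg]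
    have s2 : sg ((r : ℤ) * (k + 1)) = sg ((r : ℤ) * k) * sg (r : ℤ) := by
      rw [show (r : ℤ) * (k + 1) = (r : ℤ) * k + (r : ℤ) from by ring, sg_add]
    rw [s1, s2, coeff_one]
    have hc := sg_sq (r : ℤ)
    have hz : ((r : ℤ) * k = 0) ↔ k = 0 := by simp [hr0]; omega
    rcases lt_trichotomy k 0 with hneg | rfl | hpos
    · rw [if_neg (by omega), if_neg (by omega), if_neg (by omega),
        if_neg (fun h => absurd (hz.mp h) (by omega))]
      ring
    · rw [if_neg (by omega), if_neg (by omega), if_pos (by omega), if_pos (mul_zero (r:ℤ))]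
      have h0 : sg ((r:ℤ) * 0) = 1 := by rw [mul_zero, sg_zero]
      push_cast
      linear_combination (sg ((r:ℤ) * 0)) * hc + h0
    · by_cases hk1 : k = 1
      · subst hk1
        rw [if_neg (by omega), if_pos (by omega), if_pos (by omega),
          if_neg (fun h => absurd (hz.mp h) (by omega))]
        push_cast
        linear_combination (2 * sg ((r:ℤ) * 1)) * hc
      · rw [if_pos (by omega), if_pos (by omega), if_pos (by omega),
          if_neg (fun h => absurd (hz.mp h) (by omega))]
        push_cast
        linear_combination (sg ((r:ℤ) * k) * ((k:ℚ) - 1) + sg ((r:ℤ) * k) * ((k:ℚ) + 1)) * hc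
  · rw [coeff_one, if_neg (by rintro rfl; exact hd (dvd_zero _)),
      show (T r).coeff (z - r) = 0 from if_neg (by
        rintro ⟨-, h⟩
        exact hd (by simpa using dvd_add h (dvd_refl (r:ℤ)))),
      show (T r).coeff z = 0 from if_neg (by rintro ⟨-, h⟩; exact hd h),
      show (T r).coeff (z + r) = 0 from if_neg (by
        rintro ⟨-, h⟩
        exact hd (by simpa using dvd_sub h (dvd_refl (r:ℤ))))]
    ring

lemma PhiK_inv (r : ℕ) (hr : 1 ≤ r) : (PhiK r)⁻¹ = T r :=
  (eq_inv_of_mul_eq_one_right (PhiK_mul_T r hr)).symm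

lemma T_coeff_prime (r : ℕ) (hr1 : 1 ≤ r) (p : ℕ) (hp : p.Prime) (hrp : r < p)
    (hodd : Odd p) : (T r).coeff (p : ℤ) = if r = 1 then -(p : ℚ) else 0 := by
  by_cases h1 : r = 1
  · subst h1
    rw [if_pos rfl]
    have hpp : (0:ℤ) < (p:ℤ) := by exact_mod_cast hp.pos
    simp only [T, mkL_coeff]
    rw [if_pos ⟨hpp, by norm_num⟩]
    have hsg : sg (p : ℤ) = -1 := by
      rw [sg, if_neg]
      rw [Int.even_coe_nat]
      exact (Nat.not_even_iff_odd).mpr hodd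
    rw [hsg]
    norm_num
  · rw [if_neg h1]
    simp only [T, mkL_coeff]
    rw [if_neg]
    rintro ⟨-, hdvd⟩
    have : r ∣ p := by exact_mod_cast hdvd
    rcases (Nat.Prime.eq_one_or_self_of_dvd hp r this) with h | h
    · exact h1 h
    · omega

/-- coefficients vanish above `B`. -/
def UB (x : LaurentSeries ℚ) (B : ℤ) : Prop := ∀ n : ℤ, B < n → x.coeff n = 0

lemma UB_PhiK (r : ℕ) : UB (PhiK r) r := by
  intro n hn
  have hr0 : (0:ℤ) ≤ (r:ℤ) := Int.natCast_nonneg r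
  have h1 : n ≠ (r:ℤ) := by omega
  have h2 : n ≠ 0 := by omega
  have h3 : n ≠ -(r:ℤ) := by omega
  have h2' : (2 : LaurentSeries ℚ).coeff n = 0 := by
    rw [show (2 : LaurentSeries ℚ) = 1 + 1 from by norm_num, coeff_add, coeff_one, if_neg h2]
    norm_num
  rw [PhiK, coeff_add, coeff_sub, coeff_single_of_ne h1, coeff_single_of_ne h3, h2']
  ring

lemma UB_mul {x y : LaurentSeries ℚ} {B C : ℤ} (hx : UB x B) (hy : UB y C) :
    UB (x * y) (B + C) := by
  intro n hn
  by_contra h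
  have hmem : n ∈ (x * y).support := h
  obtain ⟨a, ha, b, hb, rfl⟩ := Set.mem_add.mp (support_mul_subset hmem)
  have ha' : a ≤ B := by by_contra hc; exact ha (hx a (by omega))
  have hb' : b ≤ C := by by_contra hc; exact hb (hy b (by omega))
  omega

lemma UB_one : UB (1 : LaurentSeries ℚ) 0 := by
  intro n hn
  rw [coeff_one, if_neg (by omega)]

lemma UB_pow {x : LaurentSeries ℚ} {B : ℤ} (hB : 0 ≤ B) (hx : UB x B) (k : ℕ) :
    UB (x ^ k) (k * B) := by
  induction k with
  | zero => simpa using UB_one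
  | succ m ih =>
    have := UB_mul ih hx
    rw [pow_succ]
    intro n hn
    exact this n (by push_cast at hn ⊢; nlinarith)

/-- **The example of Pandharipande–Thomas**, "Curve counting via stable pairs in the derived
category", showing membership in `V_d` is stronger than `q ↔ q⁻¹` symmetry with poles only at
roots of unity: for every `d ≥ 1` the expansion `Ψ` of `q/(1+q+q²)` is not a finite `ℚ`-linear
combination of the Laurent series `((−q)^r − 2 + (−q)^{−r})^{g−1}` with `g ≥ 0`, `1 ≤ r ≤ d`. -/
theorem psi_not_in_Vd (d : ℕ) (hd : 1 ≤ d) :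
    Psi ∉ Submodule.span ℚ
      {x : LaurentSeries ℚ | ∃ (g : ℕ) (r : ℕ), 1 ≤ r ∧ r ≤ d ∧ x = (PhiK r) ^ ((g : ℤ) - 1)} := by
  intro hmem
  obtain ⟨c, hsupp, hsum⟩ := Submodule.mem_span_set.mp hmem
  have hrep : ∀ x : LaurentSeries ℚ, ∃ gr : ℕ × ℕ,
      x ∈ c.support → 1 ≤ gr.2 ∧ gr.2 ≤ d ∧ x = PhiK gr.2 ^ ((gr.1 : ℤ) - 1) := by
    intro x
    by_cases hx : x ∈ c.support
    · obtain ⟨g, r, h1, h2, h3⟩ := hsupp hx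
      exact ⟨(g, r), fun _ => ⟨h1, h2, h3⟩⟩
    · exact ⟨(1, 1), fun h => absurd h hx⟩
  choose gr hgr using hrep
  set w : LaurentSeries ℚ → ℚ := fun x => if (gr x).1 = 0 ∧ (gr x).2 = 1 then 1 else 0 with hw
  set A : ℚ := ∑ x ∈ c.support, c x * w x with hA
  set N : ℕ := c.support.sup (fun x => (gr x).2 * (gr x).1) + d + 4 with hN
  have hdN : d + 4 ≤ N := by rw [hN]; omega
  have key : ∀ q : ℕ, q.Prime → N ≤ q → Psi.coeff (q : ℤ) = -(q : ℚ) * A := by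
    intro q hq hNq
    have hq3 : 3 < q := by omega
    have hqodd : Odd q := hq.odd_of_ne_two (by omega)
    have h1 : Psi.coeff (q : ℤ) = ∑ x ∈ c.support, c x * x.coeff (q : ℤ) := by
      rw [← hsum, Finsupp.sum,
        show ((∑ x ∈ c.support, c x • x).coeff (q : ℤ)) =
            ∑ x ∈ c.support, (c x • x).coeff (q : ℤ) from
          map_sum (coeff.addMonoidHom (q : ℤ)) _ _]
      exact Finset.sum_congr rfl fun x hx => by rw [HahnSeries.coeff_smul, smul_eq_mul]
    have h2 : ∀ x ∈ c.support, x.coeff (q : ℤ) = -(q : ℚ) * w x := by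
      intro x hx
      obtain ⟨hr1, hrd, hxe⟩ := hgr x hx
      rcases Nat.eq_zero_or_pos (gr x).1 with hg0 | hg1
      · have hcL : x.coeff (q : ℤ) = if (gr x).2 = 1 then -(q : ℚ) else 0 := by
          conv_lhs => rw [hxe, hg0]
          rw [show ((0 : ℕ) : ℤ) - 1 = (-1 : ℤ) from by norm_num, zpow_neg_one,
            PhiK_inv _ hr1, T_coeff_prime _ hr1 q hq (by omega) hqodd]
        rw [hcL, hw]
        simp only
        by_cases hr : (gr x).2 = 1
        · rw [if_pos hr, if_pos ⟨hg0, hr⟩]; ring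
        · rw [if_neg hr, if_neg (fun hcon => hr hcon.2)]; ring
      · have hcoeff : x.coeff (q : ℤ) = 0 := by
          rw [hxe]
          have hcast : ((gr x).1 : ℤ) - 1 = (((gr x).1 - 1 : ℕ) : ℤ) := by
            push_cast [hg1]; omega
          rw [hcast, zpow_natCast]
          apply UB_pow (B := ((gr x).2 : ℤ)) (by positivity) (UB_PhiK _)
          have hsup : (gr x).2 * (gr x).1 ≤ c.support.sup (fun x => (gr x).2 * (gr x).1) :=
            Finset.le_sup (f := fun x => (gr x).2 * (gr x).1) hx
          have hnat : ((gr x).1 - 1) * (gr x).2 < q := by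
            calc ((gr x).1 - 1) * (gr x).2 ≤ (gr x).1 * (gr x).2 :=
                  Nat.mul_le_mul_right _ (Nat.sub_le _ _)
              _ = (gr x).2 * (gr x).1 := Nat.mul_comm _ _
              _ < q := by omega
          exact_mod_cast hnat
        rw [hcoeff, hw]
        simp only
        rw [if_neg (fun h => by omega)]
        ring
    rw [h1, Finset.sum_congr rfl (fun x hx => by rw [h2 x hx]),
      show ∑ x ∈ c.support, c x * (-(q : ℚ) * w x)
          = -(q : ℚ) * ∑ x ∈ c.support, c x * w x from by
        rw [Finset.mul_sum]; exact Finset.sum_congr rfl fun x _ => by ring, ← hA]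
  obtain ⟨p, hpN, hp⟩ := Nat.exists_infinite_primes N
  obtain ⟨p', hp'N, hp'⟩ := Nat.exists_infinite_primes (p + 1)
  have e1 := Psi_coeff_sq p hp (by omega)
  have e2 := Psi_coeff_sq p' hp' (by omega)
  rw [key p hp (by omega)] at e1
  rw [key p' hp' (by omega)] at e2
  have hA0 : A ≠ 0 := by intro h; rw [h] at e1; norm_num at e1
  have hpq : ((p : ℚ)) ^ 2 * A ^ 2 = ((p' : ℚ)) ^ 2 * A ^ 2 := by linear_combination e1 - e2
  have hsq : ((p : ℚ)) ^ 2 = ((p' : ℚ)) ^ 2 := mul_right_cancel₀ (pow_ne_zero 2 hA0) hpq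
  have hfac : ((p : ℚ) - (p' : ℚ)) * ((p : ℚ) + (p' : ℚ)) = 0 := by linear_combination hsq
  rcases mul_eq_zero.mp hfac with h | h
  · have : (p : ℚ) = (p' : ℚ) := by linarith
    have : p = p' := by exact_mod_cast this
    omega
  · have hp0 : (0 : ℚ) < (p : ℚ) := by exact_mod_cast hp.pos
    have hp'0 : (0 : ℚ) < (p' : ℚ) := by exact_mod_cast hp'.pos
    linarith
end
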